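/- arXiv:1810.00176 — 2 statements merged into one kernel-verified Lean document; each statement's English description precedes it below -/
import Mathlib

section
/- Let R = ℤ[s, s⁻¹] and consider the free R-module with basis {u, v}. The quotient of R·u ⊕ R·v by the submodule generated by (1−s)(u+v), (1−s+s²)u, and (1−s+s²)v is isomorphic as an R-module to R/(R·(1−s+s²)); in particular its underlying additive group is free abelian of rank 2. -/
open LaurentPolynomial

/-- `R = ℤ[s,s⁻¹]`. -/
noncomputable abbrev LZ : Type := LaurentPolynomial ℤ

/-- `s ∈ ℤ[s,s⁻¹]`. -/
noncomputable def sL : LZ := T 1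

/-- Basis vector `u` of `R²`. -/
noncomputable def uV : Fin 2 → LZ := Pi.single 0 1
/-- Basis vector `v` of `R²`. -/
noncomputable def vV : Fin 2 → LZ := Pi.single 1 1

/-- The submodule of `R²` generated by `(1−s)(u+v)`, `(1−s+s²)u` and `(1−s+s²)v`. -/
noncomputable def imA3 : Submodule LZ (Fin 2 → LZ) :=
  Submodule.span LZ {(1 - sL) • (uV + vV), (1 - sL + sL ^ 2) • uV, (1 - sL + sL ^ 2) • vV}



noncomputable def qP : Polynomial ℤ := Polynomial.X ^ 2 - Polynomial.X + 1

lemma qP_monic : qP.Monic := by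
  unfold qP; monicity!

lemma qP_natDegree : qP.natDegree = 2 := by
  unfold qP; compute_degree!

noncomputable abbrev AR : Type := AdjoinRoot qP

lemma root_rel : (AdjoinRoot.root qP) ^ 2 - AdjoinRoot.root qP + 1 = 0 := by
  have := AdjoinRoot.mk_self (f := qP)
  have h0 : AdjoinRoot.mk qP (Polynomial.X ^ 2 - Polynomial.X + 1) = 0 := AdjoinRoot.mk_self
  simpa [map_sub, map_add, map_pow] using h0

lemma root_unit : IsUnit (AdjoinRoot.root qP) := by
  refine IsUnit.of_mul_eq_one (1 - AdjoinRoot.root qP) ?_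
  have := root_rel
  ring_nf
  ring_nf at this
  linear_combination -this

lemma mk_units : ∀ y : Submonoid.powers (Polynomial.X : Polynomial ℤ),
    IsUnit (AdjoinRoot.mk qP y) := by
  rintro ⟨y, k, rfl⟩
  simpa [map_pow] using (root_unit.pow k)

noncomputable def phi : LZ →+* AR :=
  letI := LaurentPolynomial.isLocalization (R := ℤ)
  IsLocalization.lift (S := LZ) (M := Submonoid.powers (Polynomial.X : Polynomial ℤ)) mk_units

lemma phi_toLaurent (f : Polynomial ℤ) : phi (Polynomial.toLaurent f) = AdjoinRoot.mk qP f := by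
  letI := LaurentPolynomial.isLocalization (R := ℤ)
  rw [← LaurentPolynomial.algebraMap_eq_toLaurent]
  exact IsLocalization.lift_eq (M := Submonoid.powers (Polynomial.X : Polynomial ℤ)) mk_units f

lemma phi_surj : Function.Surjective phi := by
  intro a
  obtain ⟨f, rfl⟩ := AdjoinRoot.mk_surjective a
  exact ⟨Polynomial.toLaurent f, phi_toLaurent f⟩

lemma toLaurent_qP : Polynomial.toLaurent qP = 1 - sL + sL ^ 2 := by
  simp only [qP, map_add, map_sub, map_pow, Polynomial.toLaurent_X, map_one, sL]
  ring

lemma phi_ker : RingHom.ker phi = Ideal.span {1 - sL + sL ^ 2} := by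
  ext p
  rw [RingHom.mem_ker, Ideal.mem_span_singleton]
  constructor
  · intro hp
    obtain ⟨n, f, hf⟩ := p.exists_T_pow
    have h1 : AdjoinRoot.mk qP f = 0 := by
      have := phi_toLaurent f
      rw [hf, map_mul, hp, zero_mul] at this
      exact this.symm
    have h2 : qP ∣ f := AdjoinRoot.mk_eq_zero.1 h1
    have h3 : (1 - sL + sL ^ 2) ∣ p * T n := by
      rw [← hf, ← toLaurent_qP]
      exact map_dvd _ h2
    exact ((isUnit_T (n : ℤ)).dvd_mul_right).1 h3
  · rintro ⟨c, rfl⟩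
    rw [map_mul, ← toLaurent_qP, phi_toLaurent, AdjoinRoot.mk_self, zero_mul]

lemma mem_u : (1 - sL + sL ^ 2) • uV ∈ imA3 :=
  Submodule.subset_span (by simp)

lemma mem_v : (1 - sL + sL ^ 2) • vV ∈ imA3 :=
  Submodule.subset_span (by simp)

lemma mem_uv : uV + vV ∈ imA3 := by
  have key : uV + vV = sL • ((1 - sL) • (uV + vV)) +
      ((1 - sL + sL ^ 2) • uV + (1 - sL + sL ^ 2) • vV) := by
    rw [smul_smul, ← smul_add, ← add_smul,
      show sL * (1 - sL) + (1 - sL + sL ^ 2) = 1 by ring, one_smul]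
  rw [key]
  exact add_mem (Submodule.smul_mem _ _ (Submodule.subset_span (by simp)))
    (add_mem mem_u mem_v)

noncomputable def dMap : (Fin 2 → LZ) →ₗ[LZ] LZ :=
  LinearMap.proj (R := LZ) (φ := fun _ : Fin 2 => LZ) 0 -
    LinearMap.proj (R := LZ) (φ := fun _ : Fin 2 => LZ) 1

noncomputable def Fmap :=
  ((Ideal.span {1 - sL + sL ^ 2} : Ideal LZ).mkQ).comp dMap

lemma uV_apply : uV 0 = 1 ∧ uV 1 = 0 ∧ vV 0 = 0 ∧ vV 1 = 1 := by
  refine ⟨?_, ?_, ?_, ?_⟩ <;> simp [uV, vV]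

lemma Fmap_apply (x : Fin 2 → LZ) :
    Fmap x = Submodule.Quotient.mk (x 0 - x 1) := rfl

lemma imA3_le_ker : imA3 ≤ LinearMap.ker Fmap := by
  rw [imA3, Submodule.span_le]
  rintro y (rfl | rfl | rfl) <;>
      rw [SetLike.mem_coe, LinearMap.mem_ker, Fmap_apply] <;>
      simp only [Pi.smul_apply, uV_apply.1, uV_apply.2.1, uV_apply.2.2.1, uV_apply.2.2.2,
        Pi.add_apply, smul_eq_mul] <;>
      rw [Submodule.Quotient.mk_eq_zero] <;>
      refine Ideal.mem_span_singleton.2 ?_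
  · exact ⟨0, by ring⟩
  · exact ⟨1, by ring⟩
  · exact ⟨-1, by ring⟩

noncomputable def gL := imA3.liftQ Fmap imA3_le_ker

noncomputable def Gmap := LinearMap.toSpanSingleton LZ _ (imA3.mkQ uV)

lemma span_le_kerG : Ideal.span {1 - sL + sL ^ 2} ≤ LinearMap.ker Gmap := by
  rw [Ideal.span_le]
  rintro y (rfl : y = 1 - sL + sL ^ 2)
  rw [SetLike.mem_coe, LinearMap.mem_ker]
  show (1 - sL + sL ^ 2) • (imA3.mkQ uV) = 0
  rw [← map_smul, Submodule.mkQ_apply, Submodule.Quotient.mk_eq_zero]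
  exact mem_u

noncomputable def hL := (Ideal.span {1 - sL + sL ^ 2} : Ideal LZ).liftQ Gmap span_le_kerG

noncomputable def theEquiv : ((Fin 2 → LZ) ⧸ imA3) ≃ₗ[LZ] (LZ ⧸ Ideal.span {1 - sL + sL ^ 2}) := by
  refine LinearEquiv.ofLinear gL hL ?_ ?_
  · apply Submodule.linearMap_qext
    apply LinearMap.ext
    intro x
    show gL (hL (Submodule.Quotient.mk x)) = Submodule.Quotient.mk x
    rw [hL, Submodule.liftQ_apply]
    show gL ((x • (imA3.mkQ uV))) = Submodule.Quotient.mk x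
    rw [← map_smul, Submodule.mkQ_apply]
    show Fmap (x • uV) = Submodule.Quotient.mk x
    rw [Fmap_apply]
    congr 1
    simp only [Pi.smul_apply, uV_apply.1, uV_apply.2.1, smul_eq_mul, mul_one, mul_zero, sub_zero]
  · apply Submodule.linearMap_qext
    apply LinearMap.ext
    intro x
    show hL (gL (Submodule.Quotient.mk x)) = Submodule.Quotient.mk x
    rw [gL, Submodule.liftQ_apply, Fmap_apply]
    show hL (Submodule.Quotient.mk (x 0 - x 1)) = Submodule.Quotient.mk x
    rw [hL, Submodule.liftQ_apply]
    show (x 0 - x 1) • (imA3.mkQ uV) = Submodule.Quotient.mk x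
    rw [← map_smul, Submodule.mkQ_apply]
    rw [Submodule.Quotient.eq]
    have h2 : (x 0 - x 1) • uV - x = -((x 1) • (uV + vV)) := by
      funext i
      fin_cases i <;> simp [uV, vV]
    rw [h2]
    exact neg_mem (Submodule.smul_mem _ _ mem_uv)

/-- Let `R = ℤ[s,s⁻¹]` and let `u, v` be a basis of the free `R`-module `R²`.  The
quotient of `R²` by the submodule generated by `(1−s)(u+v)`, `(1−s+s²)u` and `(1−s+s²)v`
is isomorphic as an `R`-module to `R/(R·(1−s+s²))`; in particular its underlying
additive group is free abelian of rank 2.  (Type `A₃`.) -/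
theorem quotient_A3 :
    Nonempty (((Fin 2 → LZ) ⧸ imA3) ≃ₗ[LZ] (LZ ⧸ Ideal.span {1 - sL + sL ^ 2})) ∧
      Module.Free ℤ ((Fin 2 → LZ) ⧸ imA3) ∧
      Module.rank ℤ ((Fin 2 → LZ) ⧸ imA3) = 2 := by
  have ringeq : (LZ ⧸ Ideal.span {1 - sL + sL ^ 2}) ≃+* AR :=
    (Ideal.quotEquivOfEq phi_ker.symm).trans (RingHom.quotientKerEquivOfSurjective phi_surj)
  have eInt : ((Fin 2 → LZ) ⧸ imA3) ≃ₗ[ℤ] AR :=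
    (theEquiv.restrictScalars ℤ).trans ringeq.toAddEquiv.toIntLinearEquiv
  have b : Module.Basis (Fin qP.natDegree) ℤ AR := (AdjoinRoot.powerBasis' qP_monic).basis
  refine ⟨⟨theEquiv⟩, ?_, ?_⟩
  · have : Module.Free ℤ AR := Module.Free.of_basis b
    exact Module.Free.of_equiv eInt.symm
  · rw [eInt.rank_eq, ← b.mk_eq_rank'']
    simp [qP_natDegree]
end

section
/- Let R = ℤ[s, s⁻¹] and consider the free R-module with basis {u, v}. The submodule generated by the three elements (1−s)(u+v), (1−s+s²)u, and (1−s+s²−s³+s⁴)v equals the whole module R·u ⊕ R·v. -/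
open LaurentPolynomial

/-- Let `R = ℤ[s,s⁻¹]` and let `u, v` be a basis of the free `R`-module `R²`.  The
submodule generated by `(1−s)(u+v)`, `(1−s+s²)u` and `(1−s+s²−s³+s⁴)v` is the whole
module.  (This shows the derived group of the Artin group of type `H₃` is perfect.) -/
theorem span_eq_top_H3 :
    Submodule.span LZ
        {(1 - sL) • (uV + vV), (1 - sL + sL ^ 2) • uV,
          (1 - sL + sL ^ 2 - sL ^ 3 + sL ^ 4) • vV} = ⊤ := by
  set S : Submodule LZ (Fin 2 → LZ) := Submodule.span LZ
      {(1 - sL) • (uV + vV), (1 - sL + sL ^ 2) • uV,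
        (1 - sL + sL ^ 2 - sL ^ 3 + sL ^ 4) • vV} with hS
  have h1 : (1 - sL) • (uV + vV) ∈ S := Submodule.subset_span (by simp)
  have h2 : (1 - sL + sL ^ 2) • uV ∈ S := Submodule.subset_span (by simp)
  have h3 : (1 - sL + sL ^ 2 - sL ^ 3 + sL ^ 4) • vV ∈ S := Submodule.subset_span (by simp)
  -- s⁴ • u ∈ S
  have hu4 : (sL ^ 4) • uV ∈ S := by
    have key : (1 - sL + sL ^ 2 - sL ^ 3 + sL ^ 4) • ((1 - sL) • (uV + vV)) +
        (sL ^ 3 + sL - 1) • ((1 - sL + sL ^ 2) • uV) +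
        (-(1 - sL)) • ((1 - sL + sL ^ 2 - sL ^ 3 + sL ^ 4) • vV) = (sL ^ 4) • uV := by
      funext i
      fin_cases i <;>
        simp [uV, vV, Pi.single_apply, smul_eq_mul] <;> ring
    rw [← key]
    exact add_mem (add_mem (S.smul_mem _ h1) (S.smul_mem _ h2)) (S.smul_mem _ h3)
  -- s³ • v ∈ S
  have hv3 : (sL ^ 3) • vV ∈ S := by
    have key : ((2 * sL ^ 3 - sL ^ 2 + sL - 2) * (1 - sL + sL ^ 2)) • ((1 - sL) • (uV + vV)) +
        (-((2 * sL ^ 3 - sL ^ 2 + sL - 2) * (1 - sL))) • ((1 - sL + sL ^ 2) • uV) +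
        (2 * sL ^ 2 - 3 * sL + 2) • ((1 - sL + sL ^ 2 - sL ^ 3 + sL ^ 4) • vV) =
        (sL ^ 3) • vV := by
      funext i
      fin_cases i <;>
        simp [uV, vV, Pi.single_apply, smul_eq_mul] <;> ring
    rw [← key]
    exact add_mem (add_mem (S.smul_mem _ h1) (S.smul_mem _ h2)) (S.smul_mem _ h3)
  have hu : uV ∈ S := by
    have : uV = (T (-4) : LZ) • ((sL ^ 4) • uV) := by
      rw [smul_smul]
      have : (T (-4) : LZ) * sL ^ 4 = 1 := by
        rw [sL, T_pow, ← T_add]; norm_num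
      rw [this, one_smul]
    rw [this]
    exact S.smul_mem _ hu4
  have hv : vV ∈ S := by
    have : vV = (T (-3) : LZ) • ((sL ^ 3) • vV) := by
      rw [smul_smul]
      have : (T (-3) : LZ) * sL ^ 3 = 1 := by
        rw [sL, T_pow, ← T_add]; norm_num
      rw [this, one_smul]
    rw [this]
    exact S.smul_mem _ hv3
  rw [eq_top_iff]
  rintro w -
  have hw : w = w 0 • uV + w 1 • vV := by
    funext i
    fin_cases i <;> simp [uV, vV, Pi.single_apply]
  rw [hw]
  exact add_mem (S.smul_mem _ hu) (S.smul_mem _ hv)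
end
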